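/- Let A be the adjacency matrix of a finite graph (symmetric, nonnegative integer entries, zero diagonal), let κ(v) be the degree of vertex v (row sum of A), and let q : V → ℝ. If A + diag(q) and A - diag(κ) have the same spectrum (equal characteristic polynomials) then q = -κ. -/

import Mathlib

open Matrix Polynomial

lemma eval_charpoly_aux {n : Type*} [Fintype n] [DecidableEq n]
    (M : Matrix n n ℝ) (t : ℝ) :
    M.charpoly.eval t = ((Matrix.diagonal fun _ => t) - M).det := by
  rw [Matrix.charpoly, ← Polynomial.coe_evalRingHom, RingHom.map_det]
  congr 1
  ext i j
  by_cases h : i = j <;> simp [Matrix.charmatrix, h, Matrix.diagonal_apply]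

/-- Spectral characterization of the degree potential: if `A + diag q` is
isospectral (for the periodic spectrum) to `A - diag κ`, then `q = -κ`. -/
theorem degree_potential_characterization (V : Type*) [Fintype V] [DecidableEq V]
    (A : Matrix V V ℝ) (hA : A.IsSymm) (hdiag : ∀ v, A v v = 0)
    (hnat : ∀ u v, ∃ m : ℕ, A u v = m)
    (κ : V → ℝ) (hκ : ∀ v, κ v = ∑ u, A v u)
    (q : V → ℝ)
    (hspec : (A + Matrix.diagonal q).charpoly = (A - Matrix.diagonal κ).charpoly) :
    q = fun v => -κ v := by
  classical
  cases isEmpty_or_nonempty V with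
  | inl h => exact funext fun v => (h.false v).elim
  | inr h => ?_
  have hAsymm : ∀ u v, A u v = A v u := fun u v => by
    conv_lhs => rw [← hA]
    rfl
  have hAnn : ∀ u v, 0 ≤ A u v := fun u v => by
    obtain ⟨m, hm⟩ := hnat u v; rw [hm]; positivity
  set L := Matrix.diagonal κ - A with hLdef
  -- quadratic form of the Laplacian L
  have hquad : ∀ x : V → ℝ,
      2 * (x ⬝ᵥ L *ᵥ x) = ∑ v, ∑ u, A v u * (x v - x u) ^ 2 := by
    intro x
    have hS1 : ∀ y : V → ℝ, (∑ v, ∑ u, A v u * y v) = ∑ v, κ v * y v := by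
      intro y
      refine Finset.sum_congr rfl fun v _ => ?_
      rw [hκ v, Finset.sum_mul]
    have hS2 : (∑ v, ∑ u, A v u * x u ^ 2) = ∑ v, κ v * x v ^ 2 := by
      rw [Finset.sum_comm]
      calc (∑ u, ∑ v, A v u * x u ^ 2) = ∑ u, ∑ v, A u v * x u ^ 2 := by
            exact Finset.sum_congr rfl fun u _ =>
              Finset.sum_congr rfl fun v _ => by rw [hAsymm u v]
        _ = ∑ u, κ u * x u ^ 2 := by
            refine Finset.sum_congr rfl fun u _ => ?_
            rw [hκ u, Finset.sum_mul]
    have hdot : x ⬝ᵥ L *ᵥ x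
        = (∑ v, κ v * x v ^ 2) - ∑ v, ∑ u, A v u * x v * x u := by
      simp only [hLdef, dotProduct, Matrix.mulVec, Matrix.sub_apply,
        Matrix.diagonal_apply, dotProduct]
      rw [← Finset.sum_sub_distrib]
      refine Finset.sum_congr rfl fun v _ => ?_
      have hterm : ∀ i, x v * (((if v = i then κ v else 0) - A v i) * x i)
          = (if v = i then κ v * x v ^ 2 else 0) - A v i * x v * x i := by
        intro i
        by_cases h' : v = i
        · subst h'; rw [if_pos rfl, if_pos rfl]; ring
        · rw [if_neg h', if_neg h']; ring
      rw [Finset.mul_sum, Finset.sum_congr rfl fun i _ => hterm i, Finset.sum_sub_distrib,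
        Finset.sum_ite_eq (Finset.univ : Finset V) v (fun _ => κ v * x v ^ 2)]
      simp
    calc 2 * (x ⬝ᵥ L *ᵥ x)
        = (∑ v, κ v * x v ^ 2) + (∑ v, κ v * x v ^ 2)
          - 2 * ∑ v, ∑ u, A v u * x v * x u := by rw [hdot]; ring
      _ = (∑ v, ∑ u, A v u * x v ^ 2) + (∑ v, ∑ u, A v u * x u ^ 2)
          - 2 * ∑ v, ∑ u, A v u * x v * x u := by rw [hS1 (fun v => x v ^ 2), hS2]
      _ = ∑ v, ∑ u, A v u * (x v - x u) ^ 2 := by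
          rw [← Finset.sum_add_distrib, Finset.mul_sum, ← Finset.sum_sub_distrib]
          refine Finset.sum_congr rfl fun v _ => ?_
          rw [← Finset.sum_add_distrib, Finset.mul_sum, ← Finset.sum_sub_distrib]
          exact Finset.sum_congr rfl fun u _ => by ring
  have hLnn : ∀ x : V → ℝ, 0 ≤ x ⬝ᵥ L *ᵥ x := by
    intro x
    have h1 : 0 ≤ ∑ v, ∑ u, A v u * (x v - x u) ^ 2 :=
      Finset.sum_nonneg fun v _ => Finset.sum_nonneg fun u _ =>
        mul_nonneg (hAnn v u) (sq_nonneg _)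
    nlinarith [hquad x]
  -- every real root of the charpoly of A - diag κ is ≤ 0
  have hroot : ∀ t : ℝ, (A - Matrix.diagonal κ).charpoly.eval t = 0 → t ≤ 0 := by
    intro t ht
    by_contra hpos
    push_neg at hpos
    have hdet : ((Matrix.diagonal fun _ => t) - (A - Matrix.diagonal κ)).det = 0 := by
      rw [← eval_charpoly_aux]; exact ht
    obtain ⟨x, hx0, hxv⟩ := (Matrix.exists_mulVec_eq_zero_iff).mpr hdet
    have hxx : 0 < x ⬝ᵥ x := by
      have h1 : 0 ≤ x ⬝ᵥ x := Finset.sum_nonneg fun i _ => mul_self_nonneg (x i)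
      rcases h1.lt_or_eq with h | h
      · exact h
      · exfalso
        apply hx0
        funext i
        have h2 : ∑ j, x j * x j = 0 := h.symm
        have := (Finset.sum_eq_zero_iff_of_nonneg
          (fun j _ => mul_self_nonneg (x j))).mp h2 i (Finset.mem_univ i)
        exact mul_self_eq_zero.mp this
    have hMeq : (Matrix.diagonal fun _ => t) - (A - Matrix.diagonal κ)
        = (Matrix.diagonal fun _ => t) + L := by
      rw [hLdef]; abel
    rw [hMeq] at hxv
    have hq0 : x ⬝ᵥ ((Matrix.diagonal fun _ => t) + L) *ᵥ x = 0 := by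
      rw [hxv, dotProduct_zero]
    rw [Matrix.add_mulVec, dotProduct_add] at hq0
    have hd : x ⬝ᵥ ((Matrix.diagonal fun _ => t) *ᵥ x) = t * (x ⬝ᵥ x) := by
      simp only [dotProduct, Matrix.mulVec_diagonal, Finset.mul_sum]
      exact Finset.sum_congr rfl fun i _ => by ring
    rw [hd] at hq0
    nlinarith [hLnn x]
  -- `-(A + diag q)` is positive semidefinite
  set B := A + Matrix.diagonal q with hBdef
  have hBherm : B.IsHermitian := by
    rw [Matrix.IsHermitian, Matrix.conjTranspose_eq_transpose_of_trivial,
      hBdef, Matrix.transpose_add, Matrix.diagonal_transpose, hA]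
  have hMherm : (-B).IsHermitian := hBherm.neg
  have heig : ∀ i, 0 ≤ hMherm.eigenvalues i := by
    intro i
    have hm := hMherm.eigenvalues_mem_spectrum_real i
    set μ := hMherm.eigenvalues i with hμ
    rw [spectrum.mem_iff] at hm
    have hdet : ((algebraMap ℝ (Matrix V V ℝ)) μ - (-B)).det = 0 := by
      by_contra hne
      exact hm ((Matrix.isUnit_iff_isUnit_det _).mpr (isUnit_iff_ne_zero.mpr hne))
    have halg : (algebraMap ℝ (Matrix V V ℝ)) μ = Matrix.diagonal fun _ => μ := by
      rw [Matrix.algebraMap_eq_diagonal]; rfl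
    have hev : B.charpoly.eval (-μ) = 0 := by
      rw [eval_charpoly_aux]
      have heq : (Matrix.diagonal fun _ : V => -μ) - B
          = -((algebraMap ℝ (Matrix V V ℝ)) μ - (-B)) := by
        rw [halg]
        ext i' j'
        by_cases h' : i' = j'
        · subst h'; simp [Matrix.diagonal_apply]; ring
        · simp [Matrix.diagonal_apply, h']
      rw [heq, Matrix.det_neg, hdet, mul_zero]
    have := hroot (-μ) (by rw [← hspec]; exact hev)
    linarith
  have hMpsd : (-B).PosSemidef := hMherm.posSemidef_iff_eigenvalues_nonneg.mpr heig
  -- trace equality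
  have htr : (∑ v, q v) + (∑ v, κ v) = 0 := by
    have h1 : B.trace = (A - Matrix.diagonal κ).trace := by
      rw [Matrix.trace_eq_neg_charpoly_coeff, Matrix.trace_eq_neg_charpoly_coeff,
        hspec]
    have hAtr : A.trace = 0 := by
      simp only [Matrix.trace, Matrix.diag]
      exact Finset.sum_eq_zero fun v _ => hdiag v
    rw [hBdef, Matrix.trace_add, Matrix.trace_sub, Matrix.trace_diagonal,
      Matrix.trace_diagonal, hAtr] at h1
    linarith
  -- apply the quadratic form of `-B` to the all-ones vector
  have hmv : ∀ v, ((-B) *ᵥ fun _ => (1 : ℝ)) v = -(κ v + q v) := by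
    intro v
    simp only [Matrix.mulVec, dotProduct, Matrix.neg_apply, hBdef,
      Matrix.add_apply, Matrix.diagonal_apply, mul_one]
    rw [Finset.sum_neg_distrib, Finset.sum_add_distrib, Finset.sum_ite_eq
      (Finset.univ : Finset V) v (fun _ => q v)]
    simp only [Finset.mem_univ, if_true]
    rw [← hκ v]
  have hone : star (fun _ : V => (1 : ℝ)) ⬝ᵥ ((-B) *ᵥ fun _ => (1 : ℝ)) = 0 := by
    have hstar : star (fun _ : V => (1 : ℝ)) = fun _ : V => (1 : ℝ) := by
      funext i; simp
    rw [hstar]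
    simp only [dotProduct, one_mul]
    rw [Finset.sum_congr rfl fun v _ => hmv v]
    rw [Finset.sum_neg_distrib, Finset.sum_add_distrib]
    linarith
  have hker := (hMpsd.dotProduct_mulVec_zero_iff _).mp hone
  funext v
  have hv := congrFun hker v
  rw [hmv v] at hv
  have : κ v + q v = 0 := by
    have : -(κ v + q v) = 0 := hv
    linarith
  linarith
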